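/- Let S be a set, A a nonempty finite set, d, l positive integers, H ≥ 1, β > 0, λ̃ > 0, L₁ > 0, ε > 0. Let φ : S × A → ℝ^d satisfy ‖φ(s,a)‖₂ ≤ 1 for all (s,a), and let r : S × A → [0,1] be a fixed function. Let 𝒱 be the class of all functions V : S → ℝ of the form V(s) = max_{a ∈ A} min_{1 ≤ i ≤ l} min( H, r(s,a) + w_iᵀ φ(s,a) + β·√(φ(s,a)ᵀ Λ_i⁻¹ φ(s,a)) ) with ‖w_i‖₂ ≤ L₁ and Λ_i ⪰ λ̃·I_d positive definite, and assume additionally that every V ∈ 𝒱 takes values in [0, H]. Consider the squared class 𝒱² = { V² : V ∈ 𝒱 }. Then the ε-covering number N_ε of 𝒱² with respect to the sup distance dist(f₁, f₂) = sup_{s ∈ S} |f₁(s) − f₂(s)| satisfies log N_ε ≤ d·l·log(1 + 8H·L₁/ε) + d²·l·log(1 + 32√d·H²·β² / (λ̃·ε²)). -/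

import Mathlib

open Matrix
open MeasureTheory Metric

/-- The Euclidean norm of a vector in `ℝ^d`. -/
noncomputable def euclNorm {d : ℕ} (x : Fin d → ℝ) : ℝ := Real.sqrt (∑ i, x i ^ 2)


open MeasureTheory Metric

lemma euclidean_count (ι : Type*) [Fintype ι] [Nonempty ι] (R δ : ℝ) (hR : 0 ≤ R) (hδ : 0 < δ)
    (T : Finset (EuclideanSpace ℝ ι))
    (hT : ∀ y ∈ T, ‖y‖ ≤ R) (hsep : ∀ x ∈ T, ∀ y ∈ T, x ≠ y → δ ≤ dist x y) :
    (T.card : ℝ) ≤ (1 + 2 * R / δ) ^ (Fintype.card ι) := by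
  classical
  set n := Fintype.card ι with hn
  have hfr : Module.finrank ℝ (EuclideanSpace ℝ ι) = n := finrank_euclideanSpace
  set μ : Measure (EuclideanSpace ℝ ι) := volume with hμ
  have hdisj : (↑T : Set (EuclideanSpace ℝ ι)).PairwiseDisjoint (fun y => ball y (δ/2)) := by
    intro x hx y hy hxy
    exact ball_disjoint_ball (by
      have := hsep x (by exact_mod_cast hx) y (by exact_mod_cast hy) hxy
      linarith)
  have hunion : (⋃ y ∈ T, ball y (δ/2)) ⊆ ball (0 : EuclideanSpace ℝ ι) (R + δ/2) := by
    intro z hz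
    simp only [Set.mem_iUnion] at hz
    obtain ⟨y, hy, hzy⟩ := hz
    have h1 : dist z y < δ/2 := mem_ball.mp hzy
    have h2 : dist y (0 : EuclideanSpace ℝ ι) ≤ R := by
      simpa [dist_eq_norm] using hT y hy
    have h3 := dist_triangle z y (0 : EuclideanSpace ℝ ι)
    exact mem_ball.mpr (by linarith)
  have hmeas : ∑ y ∈ T, μ (ball y (δ/2)) ≤ μ (ball (0 : EuclideanSpace ℝ ι) (R + δ/2)) := by
    rw [← measure_biUnion_finset hdisj (fun y _ => measurableSet_ball)]
    exact measure_mono hunion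
  have hball : ∀ y : EuclideanSpace ℝ ι,
      μ (ball y (δ/2)) = ENNReal.ofReal ((δ/2) ^ n) * μ (ball 0 1) := by
    intro y
    rw [Measure.addHaar_ball μ y (by positivity : (0:ℝ) ≤ δ/2), hfr]
  have hbig : μ (ball (0 : EuclideanSpace ℝ ι) (R + δ/2))
      = ENNReal.ofReal ((R + δ/2) ^ n) * μ (ball 0 1) := by
    rw [Measure.addHaar_ball μ _ (by positivity : (0:ℝ) ≤ R + δ/2), hfr]
  have hcpos : μ (ball (0 : EuclideanSpace ℝ ι) 1) ≠ 0 := (measure_ball_pos μ _ one_pos).ne'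
  have hcfin : μ (ball (0 : EuclideanSpace ℝ ι) 1) ≠ ⊤ := measure_ball_lt_top.ne
  simp only [hball, Finset.sum_const, nsmul_eq_mul, hbig] at hmeas
  rw [← mul_assoc] at hmeas
  have hmeas2 : (T.card : ENNReal) * ENNReal.ofReal ((δ/2) ^ n)
      ≤ ENNReal.ofReal ((R + δ/2) ^ n) :=
    (ENNReal.mul_le_mul_iff_left hcpos hcfin).mp hmeas
  have hmeas3 : (T.card : ℝ) * (δ/2) ^ n ≤ (R + δ/2) ^ n := by
    rw [← ENNReal.ofReal_natCast, ← ENNReal.ofReal_mul (by positivity)] at hmeas2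
    exact (ENNReal.ofReal_le_ofReal_iff (by positivity)).mp hmeas2
  have hδn : (0:ℝ) < (δ/2) ^ n := by positivity
  have key : (1 + 2 * R / δ) = (R + δ/2) / (δ/2) := by field_simp; ring
  rw [key, div_pow, le_div_iff₀ hδn]
  linarith

lemma euclidean_cover (ι : Type*) [Fintype ι] [Nonempty ι] (R δ : ℝ) (hR : 0 ≤ R) (hδ : 0 < δ) :
    ∃ T : Finset (EuclideanSpace ℝ ι),
      (∀ x : EuclideanSpace ℝ ι, ‖x‖ ≤ R → ∃ y ∈ T, ‖x - y‖ ≤ δ) ∧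
      (T.card : ℝ) ≤ (1 + 2 * R / δ) ^ (Fintype.card ι) := by
  classical
  set P : ℕ → Prop := fun k => ∃ T : Finset (EuclideanSpace ℝ ι),
    (∀ y ∈ T, ‖y‖ ≤ R) ∧ (∀ x ∈ T, ∀ y ∈ T, x ≠ y → δ ≤ dist x y) ∧ T.card = k with hP
  have hP0 : P 0 := ⟨∅, by simp, by simp, rfl⟩
  set N : ℕ := ⌊(1 + 2 * R / δ) ^ (Fintype.card ι)⌋₊ with hN
  have hPle : ∀ k, P k → k ≤ N := by
    rintro k ⟨T, h1, h2, h3⟩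
    rw [← h3]
    exact Nat.le_floor (euclidean_count ι R δ hR hδ T h1 h2)
  have hinst : DecidablePred P := Classical.decPred P
  set k₀ := @Nat.findGreatest P hinst N with hk₀
  have hPk₀ : P k₀ := Nat.findGreatest_spec (m := 0) (Nat.zero_le _) hP0
  obtain ⟨T, hTR, hTsep, hTcard⟩ := hPk₀
  refine ⟨T, ?_, ?_⟩
  · intro x hx
    by_contra hcon
    push_neg at hcon
    have hxT : x ∉ T := fun hxT => by
      have := hcon x hxT
      simp at this
      linarith
    have hsep' : ∀ a ∈ insert x T, ∀ b ∈ insert x T, a ≠ b → δ ≤ dist a b := by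
      intro a ha b hb hab
      rcases Finset.mem_insert.mp ha with h1 | h1
      · rcases Finset.mem_insert.mp hb with h2 | h2
        · exact absurd (h1.trans h2.symm) hab
        · rw [h1, dist_eq_norm]; have := hcon b h2; linarith
      · rcases Finset.mem_insert.mp hb with h2 | h2
        · rw [h2, dist_comm, dist_eq_norm]; have := hcon a h1; linarith
        · exact hTsep a h1 b h2 hab
    have hPk1 : P (k₀ + 1) := ⟨insert x T, by
        intro y hy
        rcases Finset.mem_insert.mp hy with rfl | hy
        · exact hx
        · exact hTR y hy, hsep', by rw [Finset.card_insert_of_notMem hxT, hTcard]⟩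
    have := hPle _ hPk1
    exact Nat.findGreatest_is_greatest (by omega) this hPk1
  · rw [hTcard]
    calc (k₀ : ℝ) ≤ N := by exact_mod_cast Nat.findGreatest_le N
    _ ≤ (1 + 2 * R / δ) ^ (Fintype.card ι) := Nat.floor_le (by positivity)

open Matrix

lemma sqrt_abs_sub (u v : ℝ) : |Real.sqrt u - Real.sqrt v| ≤ Real.sqrt |u - v| := by
  wlog h : v ≤ u generalizing u v
  · rw [abs_sub_comm, abs_sub_comm u v]; exact this _ _ (by linarith)
  rw [abs_of_nonneg (by linarith [Real.sqrt_le_sqrt h] : (0:ℝ) ≤ Real.sqrt u - Real.sqrt v),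
    abs_of_nonneg (by linarith : (0:ℝ) ≤ u - v)]
  rcases le_or_gt v 0 with hv | hv
  · rw [Real.sqrt_eq_zero_of_nonpos hv]
    simpa using Real.sqrt_le_sqrt (by linarith : u ≤ u - v)
  · have h1 : Real.sqrt u ≤ Real.sqrt v + Real.sqrt (u - v) := by
      have h2 : (0:ℝ) ≤ u - v := by linarith
      nlinarith [Real.sq_sqrt hv.le, Real.sq_sqrt h2, Real.sqrt_nonneg v, Real.sqrt_nonneg (u-v),
        Real.sq_sqrt (by linarith : (0:ℝ) ≤ u), Real.sqrt_nonneg u]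
    linarith

lemma dot_cs {d : ℕ} (x y : Fin d → ℝ) :
    |x ⬝ᵥ y| ≤ Real.sqrt (∑ i, x i ^ 2) * Real.sqrt (∑ i, y i ^ 2) := by
  have h := Finset.sum_mul_sq_le_sq_mul_sq Finset.univ x y
  rw [← Real.sqrt_mul_self (abs_nonneg (x ⬝ᵥ y)), ← Real.sqrt_mul (by positivity)]
  apply Real.sqrt_le_sqrt
  rw [abs_mul_abs_self, ← sq]
  exact h

lemma quad_form_bound {d : ℕ} (M : Matrix (Fin d) (Fin d) ℝ) (x : Fin d → ℝ) :
    |x ⬝ᵥ (M *ᵥ x)| ≤ Real.sqrt (∑ i, ∑ j, M i j ^ 2) * (∑ i, x i ^ 2) := by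
  have he : x ⬝ᵥ (M *ᵥ x) = ∑ p : Fin d × Fin d, M p.1 p.2 * (x p.1 * x p.2) := by
    rw [dotProduct, Fintype.sum_prod_type]
    congr 1; ext i
    rw [mulVec, dotProduct, Finset.mul_sum]
    congr 1; ext j; ring
  rw [he]
  have h := Finset.sum_mul_sq_le_sq_mul_sq Finset.univ
    (fun p : Fin d × Fin d => M p.1 p.2) (fun p : Fin d × Fin d => x p.1 * x p.2)
  have h1 : ∑ p : Fin d × Fin d, M p.1 p.2 ^ 2 = ∑ i, ∑ j, M i j ^ 2 := by
    rw [Fintype.sum_prod_type]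
  have h2 : ∑ p : Fin d × Fin d, (x p.1 * x p.2) ^ 2 = (∑ i, x i ^ 2) ^ 2 := by
    rw [Fintype.sum_prod_type, sq (∑ i, x i ^ 2), Finset.sum_mul_sum]
    congr 1; ext i; congr 1; ext j; ring
  rw [h1, h2] at h
  have h3 : |∑ p : Fin d × Fin d, M p.1 p.2 * (x p.1 * x p.2)|
      ≤ Real.sqrt ((∑ i, ∑ j, M i j ^ 2) * (∑ i, x i ^ 2) ^ 2) := by
    rw [← Real.sqrt_sq_eq_abs]
    exact Real.sqrt_le_sqrt h
  refine h3.trans ?_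
  rw [Real.sqrt_mul (by positivity), Real.sqrt_sq (by positivity)]

lemma inv_psd_and_frob {d : ℕ} (lam : ℝ) (hlam : 0 < lam) (Λ : Matrix (Fin d) (Fin d) ℝ)
    (hpd : Λ.PosDef) (hps : (Λ - lam • (1 : Matrix (Fin d) (Fin d) ℝ)).PosSemidef) :
    (∀ x : Fin d → ℝ, 0 ≤ x ⬝ᵥ (Λ⁻¹ *ᵥ x)) ∧
    (∑ i, ∑ j, (Λ⁻¹ i j) ^ 2 ≤ d / lam ^ 2) := by
  classical
  have hinv : Λ⁻¹.PosDef := hpd.inv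
  have hdet : IsUnit Λ.det := isUnit_iff_ne_zero.mpr hpd.det_pos.ne'
  have hmul : Λ * Λ⁻¹ = 1 := mul_nonsing_inv Λ hdet
  constructor
  · intro x
    have := hinv.posSemidef.dotProduct_mulVec_nonneg x
    simpa using this
  · -- key: for any x, ∑ (Λ⁻¹ *ᵥ x) i ^2 ≤ (1/lam^2) * ∑ x i ^2
    have key : ∀ x : Fin d → ℝ, lam ^ 2 * (∑ i, (Λ⁻¹ *ᵥ x) i ^ 2) ≤ ∑ i, x i ^ 2 := by
      intro x
      set z : Fin d → ℝ := Λ⁻¹ *ᵥ x with hz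
      have hΛz : Λ *ᵥ z = x := by
        rw [hz, mulVec_mulVec, hmul, one_mulVec]
      have hps' : lam * (z ⬝ᵥ z) ≤ z ⬝ᵥ x := by
        have h0 := hps.dotProduct_mulVec_nonneg z
        simp only [star_trivial, sub_mulVec, dotProduct_sub, smul_mulVec, one_mulVec,
          dotProduct_smul, smul_eq_mul] at h0
        rw [← hΛz]
        linarith
      have hcs : z ⬝ᵥ x ≤ Real.sqrt (∑ i, z i ^ 2) * Real.sqrt (∑ i, x i ^ 2) := by
        have h := dot_cs z x
        exact (le_abs_self _).trans h
      have hzz : z ⬝ᵥ z = ∑ i, z i ^ 2 := by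
        rw [dotProduct]; congr 1; ext i; ring
      rw [hzz] at hps'
      rcases eq_or_lt_of_le (by positivity : (0:ℝ) ≤ ∑ i, z i ^ 2) with h0 | h0
      · rw [← h0, mul_zero]; positivity
      · have hs : 0 < Real.sqrt (∑ i, z i ^ 2) := Real.sqrt_pos.mpr h0
        have h1 : lam * (∑ i, z i ^ 2) ≤ Real.sqrt (∑ i, z i ^ 2) * Real.sqrt (∑ i, x i ^ 2) :=
          le_trans hps' hcs
        have h2 : lam * Real.sqrt (∑ i, z i ^ 2) ≤ Real.sqrt (∑ i, x i ^ 2) := by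
          nlinarith [Real.sq_sqrt h0.le]
        nlinarith [Real.sq_sqrt h0.le, Real.sq_sqrt (by positivity : (0:ℝ) ≤ ∑ i, x i ^ 2),
          Real.sqrt_nonneg (∑ i, z i ^ 2), Real.sqrt_nonneg (∑ i, x i ^ 2)]
    have hcol : ∀ j, ∑ i, (Λ⁻¹ i j) ^ 2 ≤ 1 / lam ^ 2 := by
      intro j
      have h := key (Pi.single j 1)
      have h1 : ∀ i, (Λ⁻¹ *ᵥ Pi.single j 1) i = Λ⁻¹ i j := by
        intro i
        rw [mulVec_single]
        simp
      simp only [h1] at h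
      have h2 : ∑ i, (Pi.single j 1 : Fin d → ℝ) i ^ 2 = 1 := by
        simp [Pi.single_apply]
      rw [h2] at h
      rw [div_eq_inv_mul, le_inv_mul_iff₀ (by positivity)]
      linarith
    calc ∑ i, ∑ j, (Λ⁻¹ i j) ^ 2 = ∑ j, ∑ i, (Λ⁻¹ i j) ^ 2 := Finset.sum_comm
    _ ≤ ∑ _j : Fin d, 1 / lam ^ 2 := Finset.sum_le_sum fun j _ => hcol j
    _ = d / lam ^ 2 := by simp [div_eq_mul_inv]


lemma abs_min_sub_min' (a b c : ℝ) : |min a b - min a c| ≤ |b - c| := by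
  simpa using abs_min_sub_min_le_max a b a c

lemma abs_sup'_sub_sup' {α : Type*} (s : Finset α) (hs : s.Nonempty) (f g : α → ℝ) (c : ℝ)
    (h : ∀ a ∈ s, |f a - g a| ≤ c) : |s.sup' hs f - s.sup' hs g| ≤ c := by
  rw [abs_le]
  constructor
  · rw [neg_le, neg_sub]
    rw [sub_le_iff_le_add]
    apply Finset.sup'_le
    intro a ha
    have := abs_le.mp (h a ha)
    calc g a ≤ f a + c := by linarith
    _ ≤ c + s.sup' hs f := by linarith [Finset.le_sup' f ha]
  · rw [sub_le_iff_le_add]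
    apply Finset.sup'_le
    intro a ha
    have := abs_le.mp (h a ha)
    calc f a ≤ g a + c := by linarith
    _ ≤ c + s.sup' hs g := by linarith [Finset.le_sup' g ha]

lemma abs_inf'_sub_inf' {α : Type*} (s : Finset α) (hs : s.Nonempty) (f g : α → ℝ) (c : ℝ)
    (h : ∀ a ∈ s, |f a - g a| ≤ c) : |s.inf' hs f - s.inf' hs g| ≤ c := by
  rw [abs_le]
  constructor
  · rw [neg_le, neg_sub, sub_le_iff_le_add]
    obtain ⟨a, ha, hfa⟩ := Finset.exists_mem_eq_inf' hs f
    have h2 := abs_le.mp (h a ha)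
    have h3 : s.inf' hs g ≤ g a := Finset.inf'_le g ha
    rw [hfa]
    linarith
  · rw [sub_le_iff_le_add]
    obtain ⟨a, ha, hga⟩ := Finset.exists_mem_eq_inf' hs g
    have h2 := abs_le.mp (h a ha)
    have h3 : s.inf' hs f ≤ f a := Finset.inf'_le f ha
    rw [hga]
    linarith

open Matrix


lemma eucl_norm_eq' {ι : Type*} [Fintype ι] (x : EuclideanSpace ℝ ι) :
    ‖x‖ = Real.sqrt (∑ i, x i ^ 2) := by
  rw [EuclideanSpace.norm_eq]
  congr 1
  exact Finset.sum_congr rfl fun i _ => by rw [Real.norm_eq_abs, sq_abs]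

lemma log_nat_le {n : ℕ} {b : ℝ} (h : (n : ℝ) ≤ b) (hb : 1 ≤ b) :
    Real.log n ≤ Real.log b := by
  rcases Nat.eq_zero_or_pos n with h0 | h0
  · simp [h0]; exact Real.log_nonneg hb
  · exact Real.log_le_log (by exact_mod_cast h0) h

lemma abs_sub_max_zero (a t : ℝ) (ha : 0 ≤ a) : |a - max 0 t| ≤ |a - t| := by
  rcases le_total t 0 with h | h
  · rw [max_eq_left h, sub_zero, abs_of_nonneg ha]
    rw [abs_of_nonneg (by linarith)]
    linarith
  · rw [max_eq_right h]

/-- **Covering number of the squared optimistic value function class.** If every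
member of the optimistic class `𝒱` takes values in `[0, H]`, then the squared class
`𝒱² = {V² : V ∈ 𝒱}` admits an `ε`-cover `C` in the sup distance with
`log |C| ≤ d l log(1 + 8H L₁/ε) + d² l log(1 + 32√d H² β²/(λ̃ ε²))`. -/
theorem stmt_12 {S A : Type*} [Fintype A] [Nonempty A]
    (d l : ℕ) (hd : 0 < d) (hl : 0 < l)
    (H β lam L₁ ε : ℝ) (hH : 1 ≤ H) (hβ : 0 < β) (hlam : 0 < lam) (hL₁ : 0 < L₁)
    (hε : 0 < ε)
    (φ : S → A → Fin d → ℝ) (hφ : ∀ s a, euclNorm (φ s a) ≤ 1)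
    (r : S → A → ℝ) (hr : ∀ s a, r s a ∈ Set.Icc (0 : ℝ) 1)
    (𝒱 : Set (S → ℝ))
    (h𝒱 : 𝒱 = {V | ∃ (w : Fin l → Fin d → ℝ) (Λ : Fin l → Matrix (Fin d) (Fin d) ℝ),
      (∀ i, euclNorm (w i) ≤ L₁) ∧
      (∀ i, (Λ i).PosDef ∧ (Λ i - lam • (1 : Matrix (Fin d) (Fin d) ℝ)).PosSemidef) ∧
      ∀ s, V s = Finset.univ.sup' (Finset.univ_nonempty (α := A)) (fun a : A =>
        Finset.univ.inf' ⟨⟨0, hl⟩, Finset.mem_univ _⟩ (fun i : Fin l =>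
          min H (r s a + w i ⬝ᵥ φ s a
            + β * Real.sqrt (φ s a ⬝ᵥ ((Λ i)⁻¹ *ᵥ φ s a)))))})
    (hbd : ∀ V ∈ 𝒱, ∀ s, V s ∈ Set.Icc (0 : ℝ) H) :
    ∃ C : Finset (S → ℝ),
      (∀ V ∈ 𝒱, ∃ g ∈ C, ∀ s, |(V s) ^ 2 - g s| ≤ ε) ∧
      Real.log C.card ≤ d * l * Real.log (1 + 8 * H * L₁ / ε)
        + d ^ 2 * l * Real.log (1 + 32 * Real.sqrt d * H ^ 2 * β ^ 2 / (lam * ε ^ 2)) := by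
  classical
  have hA : (Finset.univ : Finset A).Nonempty := Finset.univ_nonempty
  have hI : (Finset.univ : Finset (Fin l)).Nonempty := ⟨⟨0, hl⟩, Finset.mem_univ _⟩
  have hdpos : (0:ℝ) < d := by exact_mod_cast hd
  have hH0 : (0:ℝ) < H := by linarith
  set δw : ℝ := ε / (4 * H) with hδw
  have hδwpos : 0 < δw := by positivity
  set δm : ℝ := (ε / (4 * H * β)) ^ 2 with hδm
  have hδmpos : 0 < δm := by positivity
  haveI : Nonempty (Fin d) := ⟨⟨0, hd⟩⟩
  obtain ⟨Tw, hTwcov, hTwcard⟩ := euclidean_cover (Fin d) L₁ δw hL₁.le hδwpos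
  obtain ⟨Tm, hTmcov, hTmcard⟩ := euclidean_cover (Fin d × Fin d) (Real.sqrt d / lam) δm
    (by positivity) hδmpos
  let Wc : Finset (Fin d → ℝ) := Tw.image WithLp.ofLp
  let Mc : Finset (Matrix (Fin d) (Fin d) ℝ) :=
    Tm.image (fun f => Matrix.of fun i j => f (i, j))
  set Vg : (Fin l → Fin d → ℝ) → (Fin l → Matrix (Fin d) (Fin d) ℝ) → S → ℝ :=
    fun w Av s => Finset.univ.sup' hA (fun a : A =>
      Finset.univ.inf' hI (fun i : Fin l =>
        min H (r s a + w i ⬝ᵥ φ s a + β * Real.sqrt (φ s a ⬝ᵥ (Av i *ᵥ φ s a))))) with hVg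
  set C : Finset (S → ℝ) := ((Fintype.piFinset fun _ : Fin l => Wc) ×ˢ
      (Fintype.piFinset fun _ : Fin l => Mc)).image
      (fun p => fun s => (max 0 (Vg p.1 p.2 s)) ^ 2) with hC
  refine ⟨C, ?_, ?_⟩
  · intro V hVmem
    have hVmem' := hVmem
    rw [h𝒱] at hVmem'
    obtain ⟨w, Λ, hw, hΛ, hVs⟩ := hVmem'
    set A' : Fin l → Matrix (Fin d) (Fin d) ℝ := fun i => (Λ i)⁻¹ with hA'
    have hwsel : ∀ i, ∃ y ∈ Wc, Real.sqrt (∑ j, (w i j - y j) ^ 2) ≤ δw := by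
      intro i
      set xw : EuclideanSpace ℝ (Fin d) := WithLp.toLp 2 (w i) with hxw
      have hwn : ‖xw‖ ≤ L₁ := by
        refine le_trans (le_of_eq (eucl_norm_eq' xw)) ?_
        exact hw i
      obtain ⟨y, hy, hxy⟩ := hTwcov xw hwn
      refine ⟨y.ofLp, Finset.mem_image_of_mem _ hy, ?_⟩
      refine le_trans (le_of_eq (eucl_norm_eq' (xw - y)).symm) hxy
    have hMsel : ∀ i, ∃ Mb ∈ Mc,
        Real.sqrt (∑ p, ∑ q, (A' i p q - Mb p q) ^ 2) ≤ δm := by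
      intro i
      have hfrob := (inv_psd_and_frob lam hlam (Λ i) (hΛ i).1 (hΛ i).2).2
      set v : EuclideanSpace ℝ (Fin d × Fin d) := WithLp.toLp 2 (fun p : Fin d × Fin d => A' i p.1 p.2) with hv
      have hnv : ‖v‖ ≤ Real.sqrt d / lam := by
        refine le_trans (le_of_eq (eucl_norm_eq' v)) ?_
        have he : ∑ p : Fin d × Fin d, v p ^ 2 = ∑ p, ∑ q, ((Λ i)⁻¹ p q) ^ 2 := by
          rw [Fintype.sum_prod_type]
        rw [he]
        calc Real.sqrt (∑ p, ∑ q, ((Λ i)⁻¹ p q) ^ 2)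
            ≤ Real.sqrt ((d : ℝ) / lam ^ 2) := Real.sqrt_le_sqrt hfrob
        _ = Real.sqrt d / lam := by
            rw [show (d:ℝ)/lam^2 = (Real.sqrt d / lam)^2 by
              rw [div_pow, Real.sq_sqrt hdpos.le], Real.sqrt_sq (by positivity)]
      obtain ⟨y, hy, hxy⟩ := hTmcov _ hnv
      refine ⟨Matrix.of fun p q => y (p, q), Finset.mem_image_of_mem _ hy, ?_⟩
      have he2 : ∑ p, ∑ q, (A' i p q - (Matrix.of fun p q => y (p, q)) p q) ^ 2
          = ∑ pq : Fin d × Fin d, ((v - y) pq) ^ 2 := by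
        rw [Fintype.sum_prod_type]
        rfl
      rw [he2]
      refine le_trans (le_of_eq (eucl_norm_eq' (v - y)).symm) hxy
    set wb : Fin l → Fin d → ℝ := fun i => (hwsel i).choose with hwb
    have hwbmem : ∀ i, wb i ∈ Wc := fun i => (hwsel i).choose_spec.1
    have hwbdist : ∀ i, Real.sqrt (∑ j, (w i j - wb i j) ^ 2) ≤ δw :=
      fun i => (hwsel i).choose_spec.2
    set Ab : Fin l → Matrix (Fin d) (Fin d) ℝ := fun i => (hMsel i).choose with hAb
    have hAbmem : ∀ i, Ab i ∈ Mc := fun i => (hMsel i).choose_spec.1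
    have hAbdist : ∀ i, Real.sqrt (∑ p, ∑ q, (A' i p q - Ab i p q) ^ 2) ≤ δm :=
      fun i => (hMsel i).choose_spec.2
    refine ⟨fun s => (max 0 (Vg wb Ab s)) ^ 2, ?_, ?_⟩
    · rw [hC]
      exact Finset.mem_image.mpr ⟨(wb, Ab), Finset.mem_product.mpr
        ⟨Fintype.mem_piFinset.mpr hwbmem, Fintype.mem_piFinset.mpr hAbmem⟩, rfl⟩
    intro s
    have hVb := hbd V hVmem s
    have hVeq : V s = Vg w A' s := hVs s
    have hφ1 : ∀ a : A, Real.sqrt (∑ j, φ s a j ^ 2) ≤ 1 := fun a => hφ s a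
    have hφ2 : ∀ a : A, ∑ j, φ s a j ^ 2 ≤ 1 := by
      intro a
      nlinarith [Real.sq_sqrt (by positivity : (0:ℝ) ≤ ∑ j, φ s a j ^ 2), hφ1 a,
        Real.sqrt_nonneg (∑ j, φ s a j ^ 2)]
    have hdiff : |Vg w A' s - Vg wb Ab s| ≤ ε / (2 * H) := by
      rw [hVg]
      apply abs_sup'_sub_sup'
      intro a _
      apply abs_inf'_sub_inf'
      intro i _
      refine le_trans (abs_min_sub_min' H _ _) ?_
      have e1 : (r s a + w i ⬝ᵥ φ s a + β * Real.sqrt (φ s a ⬝ᵥ (A' i *ᵥ φ s a)))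
          - (r s a + wb i ⬝ᵥ φ s a + β * Real.sqrt (φ s a ⬝ᵥ (Ab i *ᵥ φ s a)))
          = (w i - wb i) ⬝ᵥ φ s a
            + β * (Real.sqrt (φ s a ⬝ᵥ (A' i *ᵥ φ s a))
              - Real.sqrt (φ s a ⬝ᵥ (Ab i *ᵥ φ s a))) := by
        rw [sub_dotProduct]; ring
      rw [e1]
      have t1 : |(w i - wb i) ⬝ᵥ φ s a| ≤ δw := by
        refine le_trans (dot_cs _ _) ?_
        have hsum : ∑ j, ((w i - wb i) j) ^ 2 = ∑ j, (w i j - wb i j) ^ 2 := rfl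
        calc Real.sqrt (∑ j, ((w i - wb i) j) ^ 2) * Real.sqrt (∑ j, φ s a j ^ 2)
            ≤ δw * 1 := by
              apply mul_le_mul _ (hφ1 a) (Real.sqrt_nonneg _) hδwpos.le
              rw [hsum]; exact hwbdist i
        _ = δw := mul_one _
      have t2 : |Real.sqrt (φ s a ⬝ᵥ (A' i *ᵥ φ s a))
          - Real.sqrt (φ s a ⬝ᵥ (Ab i *ᵥ φ s a))| ≤ ε / (4 * H * β) := by
        refine le_trans (sqrt_abs_sub _ _) ?_
        have hq : |φ s a ⬝ᵥ (A' i *ᵥ φ s a) - φ s a ⬝ᵥ (Ab i *ᵥ φ s a)| ≤ δm := by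
          have e2 : φ s a ⬝ᵥ (A' i *ᵥ φ s a) - φ s a ⬝ᵥ (Ab i *ᵥ φ s a)
              = φ s a ⬝ᵥ ((A' i - Ab i) *ᵥ φ s a) := by
            rw [sub_mulVec, dotProduct_sub]
          rw [e2]
          refine le_trans (quad_form_bound _ _) ?_
          have hsum2 : ∑ p, ∑ q, ((A' i - Ab i) p q) ^ 2
              = ∑ p, ∑ q, (A' i p q - Ab i p q) ^ 2 := rfl
          calc Real.sqrt (∑ p, ∑ q, ((A' i - Ab i) p q) ^ 2) * (∑ j, φ s a j ^ 2)
              ≤ δm * 1 := by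
                apply mul_le_mul _ (hφ2 a) (by positivity) hδmpos.le
                rw [hsum2]; exact hAbdist i
          _ = δm := mul_one _
        calc Real.sqrt |φ s a ⬝ᵥ (A' i *ᵥ φ s a) - φ s a ⬝ᵥ (Ab i *ᵥ φ s a)|
            ≤ Real.sqrt δm := Real.sqrt_le_sqrt hq
        _ = ε / (4 * H * β) := by rw [hδm, Real.sqrt_sq (by positivity)]
      calc |(w i - wb i) ⬝ᵥ φ s a + β * (Real.sqrt (φ s a ⬝ᵥ (A' i *ᵥ φ s a))
              - Real.sqrt (φ s a ⬝ᵥ (Ab i *ᵥ φ s a)))|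
          ≤ |(w i - wb i) ⬝ᵥ φ s a| + β * |Real.sqrt (φ s a ⬝ᵥ (A' i *ᵥ φ s a))
              - Real.sqrt (φ s a ⬝ᵥ (Ab i *ᵥ φ s a))| := by
            refine le_trans (abs_add_le _ _) ?_
            rw [abs_mul, abs_of_pos hβ]
      _ ≤ δw + β * (ε / (4 * H * β)) :=
            add_le_add t1 (mul_le_mul_of_nonneg_left t2 hβ.le)
      _ = ε / (2 * H) := by rw [hδw]; field_simp; ring
    have hub : Vg wb Ab s ≤ H := by
      rw [hVg]
      apply Finset.sup'_le
      intro a _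
      exact le_trans (Finset.inf'_le _ (Finset.mem_univ (⟨0, hl⟩ : Fin l))) (min_le_left _ _)
    have h1 : |V s - max 0 (Vg wb Ab s)| ≤ ε / (2 * H) := by
      refine le_trans (abs_sub_max_zero _ _ hVb.1) ?_
      rw [hVeq]; exact hdiff
    have heq3 : V s ^ 2 - (max 0 (Vg wb Ab s)) ^ 2
        = (V s - max 0 (Vg wb Ab s)) * (V s + max 0 (Vg wb Ab s)) := by ring
    rw [heq3, abs_mul]
    have h2 : |V s + max 0 (Vg wb Ab s)| ≤ 2 * H := by
      have hmax0 : (0:ℝ) ≤ max 0 (Vg wb Ab s) := le_max_left _ _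
      have hmaxH : max 0 (Vg wb Ab s) ≤ H := max_le hH0.le hub
      rw [abs_of_nonneg (by linarith [hVb.1])]
      linarith [hVb.2]
    calc |V s - max 0 (Vg wb Ab s)| * |V s + max 0 (Vg wb Ab s)|
        ≤ (ε / (2 * H)) * (2 * H) := mul_le_mul h1 h2 (abs_nonneg _) (by positivity)
    _ = ε := by field_simp
  · set b1 : ℝ := 1 + 8 * H * L₁ / ε with hb1def
    set b2 : ℝ := 1 + 32 * Real.sqrt d * H ^ 2 * β ^ 2 / (lam * ε ^ 2) with hb2def
    have hb1 : (1:ℝ) ≤ b1 := le_add_of_nonneg_right (by positivity)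
    have hb2 : (1:ℝ) ≤ b2 := le_add_of_nonneg_right (by positivity)
    have hw1 : (Wc.card : ℝ) ≤ b1 ^ d := by
      refine (Nat.cast_le.mpr Finset.card_image_le).trans (hTwcard.trans (le_of_eq ?_))
      rw [Fintype.card_fin]
      congr 1
      rw [hb1def, hδw]
      field_simp
      ring
    have hm1 : (Mc.card : ℝ) ≤ b2 ^ (d * d) := by
      calc (Mc.card : ℝ) ≤ (Tm.card : ℝ) := by
            exact_mod_cast Finset.card_image_le
      _ ≤ (1 + 2 * (Real.sqrt d / lam) / δm) ^ Fintype.card (Fin d × Fin d) := hTmcard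
      _ = b2 ^ (d * d) := by
          rw [Fintype.card_prod, Fintype.card_fin]
          congr 1
          rw [hb2def, hδm]
          field_simp
          ring
    have hcard : (C.card : ℝ) ≤ b1 ^ (d * l) * b2 ^ (d * d * l) := by
      have h1 : C.card ≤ ((Fintype.piFinset fun _ : Fin l => Wc) ×ˢ
          (Fintype.piFinset fun _ : Fin l => Mc)).card := Finset.card_image_le
      rw [Finset.card_product, Fintype.card_piFinset, Fintype.card_piFinset] at h1
      simp only [Finset.prod_const, Finset.card_univ, Fintype.card_fin] at h1
      have h2 : ((Wc.card ^ l * Mc.card ^ l : ℕ) : ℝ) ≤ b1 ^ (d * l) * b2 ^ (d * d * l) := by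
        push_cast
        rw [pow_mul, pow_mul]
        exact mul_le_mul (pow_le_pow_left₀ (Nat.cast_nonneg _) hw1 l)
          (pow_le_pow_left₀ (Nat.cast_nonneg _) hm1 l)
          (pow_nonneg (Nat.cast_nonneg _) l) (pow_nonneg (by positivity) _)
      exact le_trans (by exact_mod_cast h1) h2
    have hge1 : (1:ℝ) ≤ b1 ^ (d * l) * b2 ^ (d * d * l) :=
      le_trans (one_le_pow₀ hb1) (le_mul_of_one_le_right (by positivity) (one_le_pow₀ hb2))
    refine le_trans (log_nat_le hcard hge1) ?_
    rw [Real.log_mul (by positivity) (by positivity), Real.log_pow, Real.log_pow]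
    push_cast
    rw [sq]
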